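/- Let F be a definite Horn formula, P' a finite set of variables and x a variable with x ∉ P'. The following three conditions are equivalent: (1) F ⊨ P' → x; (2) there exists a clause P → x in F such that F^x ∪ P' ⊨ P; (3) there exists a clause P → x in F such that F ∪ P' ⊨ P. -/

import Mathlib

/-- A literal is a variable with a polarity (`true` = positive). A clause is a
finite set of literals. -/
abbrev Clause (V : Type) := Finset (V × Bool)

/-- A formula is a (finite) set of clauses, read as a conjunction of disjunctions. -/
abbrev Formula (V : Type) := Finset (Clause V)

variable {V : Type} [DecidableEq V]

/-- An assignment satisfies a clause if it makes some literal of it true. -/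
def clauseSat (a : V → Bool) (c : Clause V) : Prop := ∃ l ∈ c, a l.1 = l.2

/-- An assignment satisfies a formula if it satisfies all its clauses. -/
def satF (a : V → Bool) (F : Formula V) : Prop := ∀ c ∈ F, clauseSat a c

/-- Entailment: every model of `A` is a model of `B`. -/
def entails (A B : Formula V) : Prop := ∀ a : V → Bool, satF a A → satF a B

/-- Satisfiability. -/
def satisfiable (F : Formula V) : Prop := ∃ a : V → Bool, satF a F

/-- The set of variables occurring (positively or negatively) in a formula. -/
def vars (F : Formula V) : Set V := {v | ∃ c ∈ F, ∃ b : Bool, (v, b) ∈ c}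

/-- Common equivalence: same consequences on the common variables. -/
def commonEquiv (A B : Formula V) : Prop :=
  ∀ C : Formula V, vars C ⊆ vars A ∩ vars B → (entails A C ↔ entails B C)

/-- An assignment satisfies a set of literals (viewed as unit clauses). -/
def satLits (a : V → Bool) (S : Set (V × Bool)) : Prop := ∀ l ∈ S, a l.1 = l.2

/-- A clause is Horn if it has at most one positive literal. -/
def hornClause (c : Clause V) : Prop := (c.filter (fun l => l.2 = true)).card ≤ 1

/-- A formula is Horn if all its clauses are. -/
def hornFormula (F : Formula V) : Prop := ∀ c ∈ F, hornClause c

/-- A clause is definite Horn if it has exactly one positive literal. -/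
def definiteClause (c : Clause V) : Prop := (c.filter (fun l => l.2 = true)).card = 1

/-- A formula is definite Horn if all its clauses are. -/
def definiteHorn (F : Formula V) : Prop := ∀ c ∈ F, definiteClause c

/-- The size of a formula: total number of literal occurrences. -/
def fsize (F : Formula V) : ℕ := ∑ c ∈ F, c.card

/-- The set of variables `P` as a set of positive unit clauses. -/
def unitsOf (P : Finset V) : Formula V := P.image (fun p => ({(p, true)} : Clause V))

/-- The definite Horn clause `P → x`. -/
def dClause (P : Finset V) (x : V) : Clause V :=
  P.image (fun p => ((p, false) : V × Bool)) ∪ {(x, true)}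

/-- `F ⊨ P`: the formula entails every variable of `P`. -/
def entailsV (F : Formula V) (P : Finset V) : Prop := entails F (unitsOf P)

/-- A definite Horn formula is single-head if no two distinct clauses share a head. -/
def singleHead (F : Formula V) : Prop :=
  ∀ (P P' : Finset V) (x : V), x ∉ P → x ∉ P' →
    dClause P x ∈ F → dClause P' x ∈ F → P = P'

/-- The body of a clause: its negated variables. -/
def body (c : Clause V) : Finset V := (c.filter (fun l => l.2 = false)).image Prod.fst

/-- `F^x`: the clauses of `F` containing neither `x` nor `¬x`. -/
def restr (F : Formula V) (x : V) : Formula V :=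
  F.filter (fun c => ((x, true) : V × Bool) ∉ c ∧ ((x, false) : V × Bool) ∉ c)

/-- `F[⊥/x]`: delete the clauses containing `¬x`, remove the literal `x` elsewhere. -/
def substFalse (F : Formula V) (x : V) : Formula V :=
  (F.filter (fun c => ((x, false) : V × Bool) ∉ c)).image (fun c => c.erase (x, true))

/-- `newvar P x F`: summarize the body part `P` by the new variable `x`. -/
def newvar (P : Finset V) (x : V) (F : Formula V) : Formula V :=
  ((F.filter (fun c => ∀ p ∈ P, ((p, false) : V × Bool) ∈ c)).image
      (fun c => (c \ P.image (fun p => ((p, false) : V × Bool))) ∪ {((x, false) : V × Bool)}))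
    ∪ (F.filter (fun c => ¬ ∀ p ∈ P, ((p, false) : V × Bool) ∈ c))
    ∪ {dClause P x}

section Aux

lemma mem_dClause_iff {P : Finset V} {x : V} {l : V × Bool} :
    l ∈ dClause P x ↔ (∃ p ∈ P, l = (p, false)) ∨ l = (x, true) := by
  simp [dClause, Finset.mem_union, Finset.mem_image]
  constructor
  · rintro (rfl | ⟨p, hp, rfl⟩)
    · exact Or.inr rfl
    · exact Or.inl ⟨p, hp, rfl⟩
  · rintro (⟨p, hp, rfl⟩ | rfl)
    · exact Or.inr ⟨p, hp, rfl⟩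
    · exact Or.inl rfl

lemma satF_unitsOf_iff {a : V → Bool} {P : Finset V} :
    satF a (unitsOf P) ↔ ∀ p ∈ P, a p = true := by
  constructor
  · intro h p hp
    obtain ⟨l, hl, hal⟩ := h {(p, true)} (Finset.mem_image.mpr ⟨p, hp, rfl⟩)
    simp at hl; subst hl; exact hal
  · intro h c hc
    simp [unitsOf] at hc
    obtain ⟨p, hp, rfl⟩ := hc
    exact ⟨(p, true), by simp, h p hp⟩

lemma entails_mono {A B C : Formula V} (hAB : A ⊆ B) (h : entails A C) :
    entails B C := fun a ha => h a (fun c hc => ha c (hAB hc))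

lemma satF_union {a : V → Bool} {A B : Formula V} :
    satF a (A ∪ B) ↔ satF a A ∧ satF a B := by
  constructor
  · intro h
    exact ⟨fun c hc => h c (Finset.mem_union_left _ hc),
           fun c hc => h c (Finset.mem_union_right _ hc)⟩
  · rintro ⟨h1, h2⟩ c hc
    rcases Finset.mem_union.mp hc with h | h
    · exact h1 c h
    · exact h2 c h

lemma entailsV_iff {G : Formula V} {P : Finset V} :
    entailsV G P ↔ ∀ p ∈ P, entails G {({(p, true)} : Clause V)} := by
  constructor
  · intro h p hp a ha c hc
    simp at hc; subst hc
    exact ⟨(p, true), by simp, (satF_unitsOf_iff.mp (h a ha)) p hp⟩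
  · intro h a ha
    rw [satF_unitsOf_iff]
    intro p hp
    obtain ⟨l, hl, hal⟩ := h p hp a ha {(p, true)} (by simp)
    simp at hl; subst hl; exact hal

/-- The canonical minimal model: a variable is true iff it is entailed. -/
noncomputable def minModel (G : Formula V) : V → Bool :=
  fun v => @ite _ (entails G {({(v, true)} : Clause V)}) (Classical.propDecidable _)
    true false

lemma minModel_true_iff {G : Formula V} {v : V} :
    minModel G v = true ↔ entails G {({(v, true)} : Clause V)} := by
  unfold minModel
  split <;> simp_all

/-- The minimal model satisfies a definite Horn formula. -/
lemma minModel_sat {G : Formula V} (hG : definiteHorn G) : satF (minModel G) G := by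
  intro c hc
  have hd := hG c hc
  rw [definiteClause, Finset.card_eq_one] at hd
  obtain ⟨l, hl⟩ := hd
  have hlmem : l ∈ c ∧ l.2 = true := by
    have := hl ▸ (Finset.mem_singleton_self l)
    simpa using Finset.mem_filter.mp (hl ▸ Finset.mem_singleton_self l)
  obtain ⟨hlc, hl2⟩ := hlmem
  by_cases hbody : ∀ q ∈ c, q.2 = false → minModel G q.1 = true
  · refine ⟨l, hlc, ?_⟩
    rw [hl2, minModel_true_iff]
    intro b hb d hd
    simp at hd; subst hd
    refine ⟨(l.1, true), by simp, ?_⟩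
    obtain ⟨m, hm, hbm⟩ := hb c hc
    rcases Bool.eq_false_or_eq_true m.2 with hm2 | hm2
    · have hml : m = l := by
        have : m ∈ c.filter (fun l => l.2 = true) := Finset.mem_filter.mpr ⟨hm, hm2⟩
        rw [hl] at this; exact Finset.mem_singleton.mp this
      rw [hml, hl2] at hbm
      simpa using hbm
    · exfalso
      have hment := minModel_true_iff.mp (hbody m hm hm2)
      obtain ⟨u, hu, hbu⟩ := hment b hb {(m.1, true)} (Finset.mem_singleton_self _)
      rw [Finset.mem_singleton] at hu; subst hu
      rw [hm2] at hbm
      simp at hbu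
      rw [hbm] at hbu
      exact Bool.false_ne_true hbu
  · push_neg at hbody
    obtain ⟨q, hq, hq2, hqf⟩ := hbody
    refine ⟨q, hq, ?_⟩
    rw [hq2]
    exact Bool.eq_false_iff.mpr hqf

/-- A definite clause containing `(x,true)` but not `(x,false)` is `dClause (body c) x`. -/
lemma definite_eq_dClause {c : Clause V} (hd : definiteClause c)
    {x : V} (hxt : ((x, true) : V × Bool) ∈ c) (hxf : ((x, false) : V × Bool) ∉ c) :
    c = dClause (body c) x ∧ x ∉ body c := by
  rw [definiteClause, Finset.card_eq_one] at hd
  obtain ⟨l, hl⟩ := hd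
  have hlx : l = (x, true) := by
    have : (x, true) ∈ c.filter (fun l => l.2 = true) := Finset.mem_filter.mpr ⟨hxt, rfl⟩
    rw [hl] at this; simp at this; exact this.symm
  subst hlx
  constructor
  · apply Finset.ext
    intro m
    rw [mem_dClause_iff]
    constructor
    · intro hm
      rcases Bool.eq_false_or_eq_true m.2 with hm2 | hm2
      · have : m ∈ c.filter (fun l => l.2 = true) := Finset.mem_filter.mpr ⟨hm, hm2⟩
        rw [hl] at this; simp at this
        exact Or.inr this
      · refine Or.inl ⟨m.1, ?_, ?_⟩
        · simp only [body, Finset.mem_image]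
          exact ⟨m, Finset.mem_filter.mpr ⟨hm, hm2⟩, rfl⟩
        · exact Prod.ext rfl hm2
    · rintro (⟨p, hp, rfl⟩ | rfl)
      · simp only [body, Finset.mem_image] at hp
        obtain ⟨m, hm, hm1⟩ := hp
        have hm2 := (Finset.mem_filter.mp hm).2
        have heq : m = (p, false) := Prod.ext hm1 hm2
        exact heq ▸ (Finset.mem_filter.mp hm).1
      · exact hxt
  · intro hxb
    simp only [body, Finset.mem_image] at hxb
    obtain ⟨m, hm, hm1⟩ := hxb
    have hm2 := (Finset.mem_filter.mp hm).2
    have heq : m = (x, false) := Prod.ext hm1 hm2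
    exact hxf (heq ▸ (Finset.mem_filter.mp hm).1)

/-- Direction (3) ⇒ (1). -/
lemma three_to_one {F : Formula V} {P' : Finset V} {x : V}
    (h : ∃ P : Finset V, x ∉ P ∧ dClause P x ∈ F ∧ entailsV (F ∪ unitsOf P') P) :
    entails F {dClause P' x} := by
  obtain ⟨P, hxP, hPF, hent⟩ := h
  intro a ha c hc
  simp at hc; subst hc
  by_cases hP' : ∀ p ∈ P', a p = true
  · have haU : satF a (F ∪ unitsOf P') :=
      satF_union.mpr ⟨ha, satF_unitsOf_iff.mpr hP'⟩
    have haP : ∀ p ∈ P, a p = true := satF_unitsOf_iff.mp (hent a haU)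
    obtain ⟨l, hl, hal⟩ := ha _ hPF
    rw [mem_dClause_iff] at hl
    rcases hl with ⟨p, hp, rfl⟩ | rfl
    · exact absurd hal (by simp [haP p hp])
    · exact ⟨(x, true), mem_dClause_iff.mpr (Or.inr rfl), hal⟩
  · push_neg at hP'
    obtain ⟨p, hp, hap⟩ := hP'
    exact ⟨(p, false), mem_dClause_iff.mpr (Or.inl ⟨p, hp, rfl⟩),
      by simpa using hap⟩

/-- Direction (1) ⇒ (2). -/
lemma one_to_two {F : Formula V} (hF : definiteHorn F) {P' : Finset V} {x : V}
    (hx : x ∉ P') (h1 : entails F {dClause P' x}) :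
    ∃ P : Finset V, x ∉ P ∧ dClause P x ∈ F ∧
      entailsV (restr F x ∪ unitsOf P') P := by
  by_contra hcon
  push_neg at hcon
  set G : Formula V := restr F x ∪ unitsOf P' with hG
  have hGdef : definiteHorn G := by
    intro c hc
    rcases Finset.mem_union.mp hc with h | h
    · exact hF c (Finset.mem_filter.mp h).1
    · simp only [unitsOf, Finset.mem_image] at h
      obtain ⟨p, _, rfl⟩ := h
      rw [definiteClause, Finset.filter_singleton]
      simp
  set m := minModel G with hm
  have hmG : satF m G := minModel_sat hGdef
  set a : V → Bool := fun v => if v = x then false else m v with ha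
  have haF : satF a F := by
    intro c hc
    by_cases hxf : ((x, false) : V × Bool) ∈ c
    · exact ⟨(x, false), hxf, by simp [ha]⟩
    by_cases hxt : ((x, true) : V × Bool) ∈ c
    · -- head is x
      obtain ⟨hceq, hxb⟩ := definite_eq_dClause (hF c hc) hxt hxf
      have hnot := hcon (body c) hxb (hceq ▸ hc)
      rw [entailsV_iff] at hnot
      push_neg at hnot
      obtain ⟨p, hp, hpne⟩ := hnot
      have hpm : m p = false := by
        rcases Bool.eq_false_or_eq_true (m p) with h | h
        · exact absurd (minModel_true_iff.mp h) hpne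
        · exact h
      have hpx : p ≠ x := fun he => hxb (he ▸ hp)
      refine ⟨(p, false), ?_, by simp [ha, hpx, hpm]⟩
      rw [hceq, mem_dClause_iff]
      exact Or.inl ⟨p, hp, rfl⟩
    · -- c ∈ restr F x
      have hcG : c ∈ G := Finset.mem_union_left _
        (Finset.mem_filter.mpr ⟨hc, hxt, hxf⟩)
      obtain ⟨l, hl, hml⟩ := hmG c hcG
      have hlx : l.1 ≠ x := by
        intro he
        rcases Bool.eq_false_or_eq_true l.2 with h | h
        · exact hxt ((Prod.ext he h : l = (x, true)) ▸ hl)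
        · exact hxf ((Prod.ext he h : l = (x, false)) ▸ hl)
      exact ⟨l, hl, by simp [ha, hlx, hml]⟩
  have := h1 a haF (dClause P' x) (Finset.mem_singleton_self _)
  obtain ⟨l, hl, hal⟩ := this
  rw [mem_dClause_iff] at hl
  rcases hl with ⟨p, hp, rfl⟩ | rfl
  · have hpx : p ≠ x := fun he => hx (he ▸ hp)
    have : m p = true := satF_unitsOf_iff.mp (satF_union.mp hmG).2 p hp
    simp [ha, hpx, this] at hal
  · simp [ha] at hal

/-- Direction (2) ⇒ (3). -/
lemma two_to_three {F : Formula V} {P' : Finset V} {x : V}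
    (h : ∃ P : Finset V, x ∉ P ∧ dClause P x ∈ F ∧
      entailsV (restr F x ∪ unitsOf P') P) :
    ∃ P : Finset V, x ∉ P ∧ dClause P x ∈ F ∧ entailsV (F ∪ unitsOf P') P := by
  obtain ⟨P, hxP, hPF, hent⟩ := h
  refine ⟨P, hxP, hPF, entails_mono ?_ hent⟩
  exact Finset.union_subset_union (Finset.filter_subset _ _) (le_refl _)

end Aux

/-- for a definite Horn formula `F` and a non-tautological clause
`P' → x`, the conditions `F ⊨ P' → x`, `F^x ∪ P' ⊨ P` for some `P → x ∈ F`,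
and `F ∪ P' ⊨ P` for some `P → x ∈ F` are equivalent. -/
theorem set_implies_set (F : Formula V) (hF : definiteHorn F)
    (P' : Finset V) (x : V) (hx : x ∉ P') :
    (entails F {dClause P' x} ↔
      ∃ P : Finset V, x ∉ P ∧ dClause P x ∈ F ∧
        entailsV (restr F x ∪ unitsOf P') P) ∧
    ((∃ P : Finset V, x ∉ P ∧ dClause P x ∈ F ∧
        entailsV (restr F x ∪ unitsOf P') P) ↔
      ∃ P : Finset V, x ∉ P ∧ dClause P x ∈ F ∧
        entailsV (F ∪ unitsOf P') P) := by
  constructor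
  · exact ⟨fun h1 => one_to_two hF hx h1,
      fun h2 => three_to_one (two_to_three h2)⟩
  · exact ⟨two_to_three, fun h3 => one_to_two hF hx (three_to_one h3)⟩
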